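/- Let b > 0, let k ∈ L¹(0,b) satisfy the generalized Sonine condition, and let f ∈ C¹[0,b]. Then there exists u ∈ L¹(0,b) satisfying ∫₀ᵗ k(t−s) u(s) ds = f(t) for almost all t ∈ (0,b). -/

import Mathlib

open MeasureTheory Set Filter intervalIntegral

open Convolution ContinuousLinearMap

set_option maxHeartbeats 3200000


noncomputable abbrev Lm : ℝ →L[ℝ] ℝ →L[ℝ] ℝ := ContinuousLinearMap.mul ℝ ℝ

namespace Stmt10

/-- pointwise norm bound for convolution -/
lemma norm_conv_le (p q : ℝ → ℝ) (x : ℝ) :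
    ‖(p ⋆[Lm] q) x‖ ≤ ((fun y => ‖p y‖) ⋆[Lm] fun y => ‖q y‖) x := by
  by_cases h : Integrable (fun t => p t * q (x - t)) volume
  · calc ‖(p ⋆[Lm] q) x‖ ≤ ∫ t, ‖p t * q (x - t)‖ := by
          simpa [convolution_def] using norm_integral_le_integral_norm (fun t => p t * q (x - t))
      _ = _ := by
          simp [convolution_def, abs_mul]
  · have : (p ⋆[Lm] q) x = 0 := by
      rw [convolution_def]
      exact integral_undef (by simpa [mul_apply'] using h)
    rw [this]
    simp only [norm_zero, convolution_def, mul_apply']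
    exact integral_nonneg fun t => by positivity

lemma integral_norm_conv_le {p q : ℝ → ℝ} (hp : Integrable p volume) (hq : Integrable q volume) :
    ∫ x, ‖(p ⋆[Lm] q) x‖ ≤ (∫ x, ‖p x‖) * ∫ x, ‖q x‖ := by
  have h1 : Integrable ((fun y => ‖p y‖) ⋆[Lm] fun y => ‖q y‖) volume :=
    hp.norm.integrable_convolution Lm hq.norm
  calc ∫ x, ‖(p ⋆[Lm] q) x‖ ≤ ∫ x, ((fun y => ‖p y‖) ⋆[Lm] fun y => ‖q y‖) x :=
        integral_mono (hp.integrable_convolution Lm hq).norm h1 (norm_conv_le p q)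
    _ = (∫ x, ‖p x‖) * ∫ x, ‖q x‖ := by
        simpa using integral_convolution Lm hp.norm hq.norm

end Stmt10

namespace Stmt10

lemma conv_comm (p q : ℝ → ℝ) (x : ℝ) : (p ⋆[Lm] q) x = (q ⋆[Lm] p) x := by
  rw [convolution_mul_swap]
  simp only [convolution_def, mul_apply']
  exact integral_congr_ae (Eventually.of_forall fun t => mul_comm _ _)

lemma conv_zero_of_nonpos {p q : ℝ → ℝ} (hp : ∀ y ≤ 0, p y = 0) (hq : ∀ y ≤ 0, q y = 0)
    {x : ℝ} (hx : x ≤ 0) : (p ⋆[Lm] q) x = 0 := by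
  rw [convolution_def]
  have : ∀ t : ℝ, (Lm (p t)) (q (x - t)) = 0 := by
    intro t
    rcases le_or_gt t 0 with h | h
    · simp [mul_apply', hp t h]
    · simp [mul_apply', hq (x - t) (by linarith)]
  simp [this]

lemma conv_eq_intervalIntegral {b : ℝ} {p q : ℝ → ℝ}
    (hp : ∀ y, y ∉ Ioo (0:ℝ) b → p y = 0) (hq : ∀ y, y ∉ Ioo (0:ℝ) b → q y = 0)
    {t : ℝ} (ht : 0 < t) (htb : t ≤ b) :
    (p ⋆[Lm] q) t = ∫ s in (0:ℝ)..t, p (t - s) * q s := by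
  rw [convolution_mul_swap]
  have hvan : ∀ s, s ∉ Ioo (0:ℝ) t → p (t - s) * q s = 0 := by
    intro s hs
    rcases le_or_gt s 0 with h | h
    · rw [hq s (fun h' => absurd h'.1 (not_lt.2 h)), mul_zero]
    · have hst : t ≤ s := by
        by_contra h'
        exact hs ⟨h, not_le.1 h'⟩
      rw [hp (t - s) (fun h' => absurd h'.1 (by simp; linarith)), zero_mul]
  rw [intervalIntegral.integral_of_le ht.le, integral_Ioc_eq_integral_Ioo,
    setIntegral_eq_integral_of_forall_compl_eq_zero hvan]

lemma conv_causal_congr_right {p q₁ q₂ : ℝ → ℝ} (hp : ∀ s ≤ 0, p s = 0) {c : ℝ}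
    (hq : ∀ᵐ y, y < c → q₁ y = q₂ y) {x : ℝ} (hx : x ≤ c) :
    (p ⋆[Lm] q₁) x = (p ⋆[Lm] q₂) x := by
  simp only [convolution_def, mul_apply']
  apply MeasureTheory.integral_congr_ae
  have h2 : ∀ᵐ s : ℝ, x - s < c → q₁ (x - s) = q₂ (x - s) :=
    (quasiMeasurePreserving_sub_left_of_right_invariant volume x).tendsto_ae.eventually hq
  filter_upwards [h2] with s hs
  rcases le_or_gt s 0 with h | h
  · simp [hp s h]
  · rw [hs (by linarith)]

lemma conv_causal_congr_left {p₁ p₂ q : ℝ → ℝ} (hq : ∀ y ≤ 0, q y = 0) {c : ℝ}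
    (hp : ∀ᵐ s, s < c → p₁ s = p₂ s) {x : ℝ} (hx : x ≤ c) :
    (p₁ ⋆[Lm] q) x = (p₂ ⋆[Lm] q) x := by
  simp only [convolution_def, mul_apply']
  apply MeasureTheory.integral_congr_ae
  filter_upwards [hp] with s hs
  rcases lt_or_ge s c with h | h
  · rw [hs h]
  · rw [hq (x - s) (by linarith), mul_zero, mul_zero]

end Stmt10

namespace Stmt10

lemma exists_solution {a w : ℝ → ℝ} (ha : Integrable a volume) (hw : Integrable w volume)
    (hnorm : (∫ x, ‖a x‖) < 1) {S : Set ℝ} (hS : MeasurableSet S) :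
    ∃ v : ℝ → ℝ, Integrable v volume ∧
      ∀ᵐ t : ℝ, v t + S.indicator (a ⋆[Lm] v) t = S.indicator w t := by
  classical
  -- the Volterra-type operator on L¹
  have hint : ∀ φ : ℝ →₁[(volume : Measure ℝ)] ℝ, Integrable (S.indicator (a ⋆[Lm] ⇑φ)) volume :=
    fun φ => ((ha.integrable_convolution Lm (L1.integrable_coeFn φ))).indicator hS
  set T₀ : (ℝ →₁[(volume : Measure ℝ)] ℝ) →ₗ[ℝ] (ℝ →₁[(volume : Measure ℝ)] ℝ) :=
    { toFun := fun φ => (hint φ).toL1 _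
      map_add' := by
        intro φ ψ
        rw [← Integrable.toL1_add _ _ (hint φ) (hint ψ), Integrable.toL1_eq_toL1_iff]
        have h1 : (⇑(φ + ψ) : ℝ → ℝ) =ᵐ[volume] ⇑φ + ⇑ψ := Lp.coeFn_add φ ψ
        have h2 : (a ⋆[Lm] ⇑(φ + ψ)) = a ⋆[Lm] (⇑φ + ⇑ψ) :=
          convolution_congr Lm (EventuallyEq.refl _ _) h1
        have h3 : (a ⋆[Lm] (⇑φ + ⇑ψ)) =ᵐ[volume] (a ⋆[Lm] ⇑φ) + (a ⋆[Lm] ⇑ψ) := by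
          filter_upwards [ha.ae_convolution_exists Lm (L1.integrable_coeFn φ),
            ha.ae_convolution_exists Lm (L1.integrable_coeFn ψ)] with x hx1 hx2
          exact hx1.distrib_add hx2
        rw [h2]
        filter_upwards [h3] with x hx
        simp only [Set.indicator_apply, Pi.add_apply]
        split <;> simp [hx]
      map_smul' := by
        intro c φ
        rw [RingHom.id_apply, ← Integrable.toL1_smul _ (hint φ) c, Integrable.toL1_eq_toL1_iff]
        have h1 : (⇑(c • φ) : ℝ → ℝ) =ᵐ[volume] c • ⇑φ := Lp.coeFn_smul c φ
        have h2 : (a ⋆[Lm] ⇑(c • φ)) = a ⋆[Lm] (c • ⇑φ) :=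
          convolution_congr Lm (EventuallyEq.refl _ _) h1
        rw [h2, convolution_smul]
        refine Eventually.of_forall fun x => ?_
        by_cases hxS : x ∈ S <;> simp [Set.indicator_apply, hxS] }
  have hbound : ∀ φ : ℝ →₁[(volume : Measure ℝ)] ℝ, ‖T₀ φ‖ ≤ (∫ x, ‖a x‖) * ‖φ‖ := by
    intro φ
    have h1 : ‖T₀ φ‖ = ∫ x, ‖S.indicator (a ⋆[Lm] ⇑φ) x‖ :=
      L1.norm_of_fun_eq_integral_norm (hint φ)
    have h2 : ∫ x, ‖S.indicator (a ⋆[Lm] ⇑φ) x‖ ≤ ∫ x, ‖(a ⋆[Lm] ⇑φ) x‖ := by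
      apply integral_mono (hint φ).norm
        (ha.integrable_convolution Lm (L1.integrable_coeFn φ)).norm
      intro x
      exact norm_indicator_le_norm_self _ x
    have h3 := integral_norm_conv_le ha (L1.integrable_coeFn φ)
    rw [h1, L1.norm_eq_integral_norm]
    exact h2.trans h3
  set T := T₀.mkContinuous (∫ x, ‖a x‖) hbound with hT
  have hTnorm : ‖T‖ ≤ ∫ x, ‖a x‖ :=
    LinearMap.mkContinuous_norm_le _ (integral_nonneg fun x => norm_nonneg _) _
  have hlt : ‖-T‖ < 1 := by
    rw [norm_neg]
    exact lt_of_le_of_lt hTnorm hnorm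
  set un : ((ℝ →₁[(volume : Measure ℝ)] ℝ) →L[ℝ] (ℝ →₁[(volume : Measure ℝ)] ℝ))ˣ :=
    Units.oneSub (-T) hlt with hun
  set wE : ℝ →₁[(volume : Measure ℝ)] ℝ := (hw.indicator hS).toL1 _ with hwE
  set vE : ℝ →₁[(volume : Measure ℝ)] ℝ := un⁻¹.1 wE with hvE
  have hsolve : vE + T vE = wE := by
    have h1 : un.1 (un⁻¹.1 wE) = wE := by
      calc un.1 (un⁻¹.1 wE) = (un.1 * un⁻¹.1) wE := rfl
        _ = wE := by rw [un.mul_inv]; rfl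
    have h2 : un.1 (un⁻¹.1 wE) = vE + T vE := by
      show ((1 : (ℝ →₁[(volume : Measure ℝ)] ℝ) →L[ℝ] (ℝ →₁[(volume : Measure ℝ)] ℝ)) - -T) vE
        = vE + T vE
      rw [ContinuousLinearMap.sub_apply, ContinuousLinearMap.neg_apply,
        ContinuousLinearMap.one_apply, sub_neg_eq_add]
    rw [← h2, h1]
  refine ⟨⇑vE, L1.integrable_coeFn vE, ?_⟩
  have e1 : (⇑(vE + T vE) : ℝ → ℝ) =ᵐ[volume] ⇑vE + ⇑(T vE) := Lp.coeFn_add _ _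
  have e2 : (⇑(T vE) : ℝ → ℝ) =ᵐ[volume] S.indicator (a ⋆[Lm] ⇑vE) :=
    Integrable.coeFn_toL1 (hint vE)
  have e3 : (⇑wE : ℝ → ℝ) =ᵐ[volume] S.indicator w := Integrable.coeFn_toL1 _
  have e0 : (⇑(vE + T vE) : ℝ → ℝ) =ᵐ[volume] ⇑wE := by rw [hsolve]
  filter_upwards [e0, e1, e2, e3] with t h0 h1 h2 h3
  rw [← h2, ← Pi.add_apply, ← h1, h0, h3]

end Stmt10

namespace Stmt10

lemma exists_weight {b : ℝ} (hb : 0 < b) {h : ℝ → ℝ} (hh : IntegrableOn h (Ioo 0 b)) :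
    ∃ c : ℝ, 0 ≤ c ∧
      (∫ x, ‖(Ioo (0:ℝ) b).indicator (fun t => Real.exp (-(c * t)) * h t) x‖) < 1 := by
  have key : ∀ c : ℝ, (∫ x, ‖(Ioo (0:ℝ) b).indicator (fun t => Real.exp (-(c * t)) * h t) x‖)
      = ∫ t in Ioo (0:ℝ) b, ‖Real.exp (-(c * t)) * h t‖ := by
    intro c
    rw [← MeasureTheory.integral_indicator measurableSet_Ioo]
    congr 1
    ext x
    rw [norm_indicator_eq_indicator_norm]
  have htend : Tendsto (fun n : ℕ => ∫ t in Ioo (0:ℝ) b, ‖Real.exp (-((n:ℝ) * t)) * h t‖)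
      atTop (nhds 0) := by
    have := MeasureTheory.tendsto_integral_of_dominated_convergence
      (μ := volume.restrict (Ioo (0:ℝ) b))
      (F := fun (n : ℕ) t => ‖Real.exp (-((n:ℝ) * t)) * h t‖) (f := fun _ => 0)
      (bound := fun t => ‖h t‖)
      (fun n => (((Real.continuous_exp.comp (continuous_const.mul continuous_id).neg
        ).aestronglyMeasurable.mul hh.aestronglyMeasurable)).norm)
      hh.norm
      (by
        intro n
        filter_upwards [ae_restrict_mem measurableSet_Ioo] with t ht
        rw [norm_norm, norm_mul]
        have h1 : Real.exp (-((n:ℝ) * t)) ≤ 1 := by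
          rw [Real.exp_le_one_iff]
          have : (0:ℝ) ≤ (n:ℝ) * t := mul_nonneg (Nat.cast_nonneg n) ht.1.le
          linarith
        calc ‖Real.exp (-((n:ℝ) * t))‖ * ‖h t‖ ≤ 1 * ‖h t‖ := by
              apply mul_le_mul_of_nonneg_right _ (norm_nonneg _)
              rw [Real.norm_eq_abs, abs_of_pos (Real.exp_pos _)]
              exact h1
          _ = ‖h t‖ := one_mul _)
      (by
        filter_upwards [ae_restrict_mem measurableSet_Ioo] with t ht
        have : Tendsto (fun n : ℕ => Real.exp (-((n:ℝ) * t))) atTop (nhds 0) := by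
          have hrw : ∀ n : ℕ, Real.exp (-((n:ℝ) * t)) = Real.exp (-t) ^ n := by
            intro n
            rw [← Real.exp_nat_mul]
            ring_nf
          simp only [hrw]
          exact tendsto_pow_atTop_nhds_zero_of_lt_one (Real.exp_pos _).le
            (by rw [Real.exp_lt_one_iff]; linarith [ht.1])
        have := (this.mul tendsto_const_nhds (b := h t)).norm
        simpa using this)
    simpa using this
  have hev : ∀ᶠ n : ℕ in atTop,
      (∫ t in Ioo (0:ℝ) b, ‖Real.exp (-((n:ℝ) * t)) * h t‖) < 1 :=
    htend.eventually_lt_const one_pos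
  obtain ⟨n, hn⟩ := hev.exists
  exact ⟨n, Nat.cast_nonneg n, by rw [key]; exact hn⟩

end Stmt10

open Stmt10

/-- if `k ∈ L¹(0,b)` satisfies the generalized Sonine condition and
`f ∈ C¹[0,b]`, then there exists `u ∈ L¹(0,b)` with `∫₀ᵗ k(t-s) u(s) ds = f t`
for almost all `t ∈ (0,b)`. -/
theorem stmt10 (b : ℝ) (hb : 0 < b) (k K g f : ℝ → ℝ)
    (hk : IntegrableOn k (Ioo 0 b))
    (hK : IntegrableOn K (Ioo 0 b))
    (hg_diff : Differentiable ℝ g)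
    (hg' : IntegrableOn (deriv g) (Ioo 0 b))
    (hg0 : g 0 = 1)
    (hgsc : ∀ᵐ t : ℝ, t ∈ Ioo (0:ℝ) b → (∫ s in (0:ℝ)..t, K (t - s) * k s) = g t)
    (hf : ContDiffOn ℝ 1 f (Icc 0 b)) :
    ∃ u : ℝ → ℝ, IntegrableOn u (Ioo 0 b) ∧
      ∀ᵐ t : ℝ, t ∈ Ioo (0:ℝ) b → (∫ s in (0:ℝ)..t, k (t - s) * u s) = f t := by
  classical
  set I : Set ℝ := Ioo 0 b with hIdef
  have hImeas : MeasurableSet I := measurableSet_Ioo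
  -- zero extensions
  set kb : ℝ → ℝ := I.indicator k with hkbdef
  set Kb : ℝ → ℝ := I.indicator K with hKbdef
  set gb : ℝ → ℝ := I.indicator g with hgbdef
  set a0 : ℝ → ℝ := I.indicator (deriv g) with ha0def
  set fb : ℝ → ℝ := I.indicator f with hfbdef
  set φ : ℝ → ℝ := fun s => derivWithin f (Icc 0 b) s with hφdef
  set fb' : ℝ → ℝ := I.indicator φ with hfb'def
  -- integrability
  have hkb : Integrable kb volume := (integrable_indicator_iff hImeas).2 hk
  have hKb : Integrable Kb volume := (integrable_indicator_iff hImeas).2 hK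
  have ha0 : Integrable a0 volume := (integrable_indicator_iff hImeas).2 hg'
  have hfc : ContinuousOn f (Icc 0 b) := hf.continuousOn
  have hfbi : Integrable fb volume := (integrable_indicator_iff hImeas).2
    ((hfc.integrableOn_Icc).mono_set Ioo_subset_Icc_self)
  have hφc : ContinuousOn φ (Icc 0 b) :=
    hf.continuousOn_derivWithin (uniqueDiffOn_Icc hb) le_rfl
  have hfb'i : Integrable fb' volume := (integrable_indicator_iff hImeas).2
    ((hφc.integrableOn_Icc).mono_set Ioo_subset_Icc_self)
  -- support lemmas
  have hI_nonpos : ∀ y : ℝ, y ≤ 0 → y ∉ I := by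
    intro y hy hmem
    exact absurd hmem.1 (not_lt.2 hy)
  have hksupp : ∀ y, y ∉ I → kb y = 0 := fun y hy => indicator_of_notMem hy _
  have hKsupp : ∀ y, y ∉ I → Kb y = 0 := fun y hy => indicator_of_notMem hy _
  have ha0supp : ∀ y, y ∉ I → a0 y = 0 := fun y hy => indicator_of_notMem hy _
  have hfbsupp : ∀ y, y ∉ I → fb y = 0 := fun y hy => indicator_of_notMem hy _
  have hfb'supp : ∀ y, y ∉ I → fb' y = 0 := fun y hy => indicator_of_notMem hy _
  have hgbsupp : ∀ y, y ∉ I → gb y = 0 := fun y hy => indicator_of_notMem hy _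
  -- the first approximation u₀ = f 0 • K + K ⋆ f'
  set KF' : ℝ → ℝ := Kb ⋆[Lm] fb' with hKF'def
  have hKF'int : Integrable KF' volume := hKb.integrable_convolution Lm hfb'i
  set u0 : ℝ → ℝ := (f 0) • Kb + KF' with hu0def
  have hu0app : ∀ t, u0 t = f 0 * Kb t + KF' t := by
    intro t; simp [hu0def, smul_eq_mul]
  have hu0int : Integrable u0 volume := ((hKb.smul (f 0))).add hKF'int
  set ub0 : ℝ → ℝ := I.indicator u0 with hub0def
  have hub0int : Integrable ub0 volume := hu0int.indicator hImeas
  have hKF'supp : ∀ y ≤ 0, KF' y = 0 := fun y hy =>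
    conv_zero_of_nonpos (fun z hz => hKsupp z (hI_nonpos z hz))
      (fun z hz => hfb'supp z (hI_nonpos z hz)) hy
  have hub0_eq : ∀ y < b, ub0 y = u0 y := by
    intro y hy
    by_cases hmem : y ∈ I
    · exact indicator_of_mem hmem u0
    · have hy0 : y ≤ 0 := by
        by_contra h
        exact hmem ⟨not_le.1 h, hy⟩
      rw [hub0def, indicator_of_notMem hmem, hu0app, hKsupp y (hI_nonpos y hy0),
        hKF'supp y hy0, mul_zero, add_zero]
  -- step (i): causal replacement
  have hstep1 : ∀ x ≤ b, (kb ⋆[Lm] ub0) x = (kb ⋆[Lm] u0) x := fun x hx =>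
    conv_causal_congr_right (fun s hs => hksupp s (hI_nonpos s hs))
      (Eventually.of_forall fun y hy => hub0_eq y hy) hx
  -- step (ii): splitting
  have hstep2 : ∀ᵐ x : ℝ, (kb ⋆[Lm] u0) x = f 0 * (kb ⋆[Lm] Kb) x + (kb ⋆[Lm] KF') x := by
    filter_upwards [hkb.ae_convolution_exists Lm (hKb.smul (f 0)),
      hkb.ae_convolution_exists Lm hKF'int] with x h1 h2
    rw [hu0def, h1.distrib_add h2, convolution_smul]
    simp [smul_eq_mul]
  -- step (iii): the Sonine identity
  have hstep3 : ∀ᵐ x : ℝ, x ∈ I → (kb ⋆[Lm] Kb) x = g x := by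
    filter_upwards [hgsc] with x hx hxI
    rw [conv_comm, conv_eq_intervalIntegral hKsupp hksupp hxI.1 hxI.2.le, ← hx hxI]
    rw [intervalIntegral.integral_of_le hxI.1.le, intervalIntegral.integral_of_le hxI.1.le,
      integral_Ioc_eq_integral_Ioo, integral_Ioc_eq_integral_Ioo]
    apply setIntegral_congr_fun measurableSet_Ioo
    intro s hs
    have hsI : s ∈ I := ⟨hs.1, hs.2.trans hxI.2⟩
    have hxsI : x - s ∈ I := ⟨by linarith [hs.2], by linarith [hxI.2, hs.1]⟩
    simp only [hKbdef, hkbdef, indicator_of_mem hsI, indicator_of_mem hxsI]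
  -- step (iv): associativity
  have hstep4 : ∀ᵐ x : ℝ, (kb ⋆[Lm] KF') x = ((kb ⋆[Lm] Kb) ⋆[Lm] fb') x := by
    filter_upwards [hkb.norm.ae_convolution_exists Lm
      (hKb.norm.integrable_convolution Lm hfb'i.norm)] with x hx
    exact (convolution_assoc Lm Lm Lm Lm (fun x y z => mul_assoc x y z)
      hkb.aestronglyMeasurable hKb.aestronglyMeasurable hfb'i.aestronglyMeasurable
      (hkb.ae_convolution_exists Lm hKb)
      (hKb.norm.ae_convolution_exists Lm hfb'i.norm) hx).symm
  -- step (v): replace kb ⋆ Kb by gb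
  have hkKg : ∀ᵐ s : ℝ, s < b → (kb ⋆[Lm] Kb) s = gb s := by
    filter_upwards [hstep3] with s hs hsb
    by_cases hmem : s ∈ I
    · rw [hs hmem, hgbdef, indicator_of_mem hmem]
    · have hs0 : s ≤ 0 := by
        by_contra h
        exact hmem ⟨not_le.1 h, hsb⟩
      rw [conv_zero_of_nonpos (fun z hz => hksupp z (hI_nonpos z hz))
        (fun z hz => hKsupp z (hI_nonpos z hz)) hs0, hgbsupp s hmem]
  have hstep5 : ∀ᵐ x : ℝ, x ≤ b → ((kb ⋆[Lm] Kb) ⋆[Lm] fb') x = (gb ⋆[Lm] fb') x := by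
    filter_upwards with x hx
    exact conv_causal_congr_left (fun y hy => hfb'supp y (hI_nonpos y hy)) hkKg hx
  -- step (vi): integration by parts
  have hstep6 : ∀ t ∈ I, (gb ⋆[Lm] fb') t = f t - g t * f 0 + (a0 ⋆[Lm] fb) t := by
    intro t ht
    have htb : t < b := ht.2
    have ht0 : 0 < t := ht.1
    -- rewrite both convolutions as interval integrals
    have e1 : (gb ⋆[Lm] fb') t = ∫ s in (0:ℝ)..t, g (t - s) * φ s := by
      rw [conv_eq_intervalIntegral hgbsupp hfb'supp ht0 htb.le,
        intervalIntegral.integral_of_le ht0.le, intervalIntegral.integral_of_le ht0.le,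
        integral_Ioc_eq_integral_Ioo, integral_Ioc_eq_integral_Ioo]
      apply setIntegral_congr_fun measurableSet_Ioo
      intro s hs
      have hsI : s ∈ I := ⟨hs.1, hs.2.trans htb⟩
      have htsI : t - s ∈ I := ⟨by linarith [hs.2], by linarith [hs.1]⟩
      simp only [hgbdef, hfb'def, indicator_of_mem hsI, indicator_of_mem htsI]
    have e2 : (a0 ⋆[Lm] fb) t = ∫ s in (0:ℝ)..t, deriv g (t - s) * f s := by
      rw [conv_eq_intervalIntegral ha0supp hfbsupp ht0 htb.le,
        intervalIntegral.integral_of_le ht0.le, intervalIntegral.integral_of_le ht0.le,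
        integral_Ioc_eq_integral_Ioo, integral_Ioc_eq_integral_Ioo]
      apply setIntegral_congr_fun measurableSet_Ioo
      intro s hs
      have hsI : s ∈ I := ⟨hs.1, hs.2.trans htb⟩
      have htsI : t - s ∈ I := ⟨by linarith [hs.2], by linarith [hs.1]⟩
      simp only [ha0def, hfbdef, indicator_of_mem hsI, indicator_of_mem htsI]
    -- interval integrabilities
    have hiA : IntervalIntegrable (fun s => deriv g (t - s) * f s) volume 0 t := by
      have h1 : IntervalIntegrable (deriv g) volume 0 t :=
        (intervalIntegrable_iff_integrableOn_Ioc_of_le ht0.le).2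
          (hg'.mono_set (Ioc_subset_Ioo_right htb))
      have h2 : IntervalIntegrable (fun s => deriv g (t - s)) volume 0 t := by
        have h3 := (h1.comp_sub_left t).symm
        simpa using h3
      apply h2.mul_continuousOn
      apply hfc.mono
      rw [uIcc_of_le ht0.le]
      exact Icc_subset_Icc le_rfl htb.le
    have hiB : IntervalIntegrable (fun s => g (t - s) * φ s) volume 0 t := by
      apply ContinuousOn.intervalIntegrable
      apply ContinuousOn.mul
      · exact (hg_diff.continuous.comp (continuous_const.sub continuous_id)).continuousOn
      · apply hφc.mono
        rw [uIcc_of_le ht0.le]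
        exact Icc_subset_Icc le_rfl htb.le
    -- FTC on s ↦ g (t - s) * f s
    have hFTC : ∫ s in (0:ℝ)..t, (-(deriv g (t - s) * f s) + g (t - s) * φ s)
        = f t - g t * f 0 := by
      have := intervalIntegral.integral_eq_sub_of_hasDeriv_right_of_le ht0.le
        (f := fun s => g (t - s) * f s)
        (f' := fun s => -(deriv g (t - s) * f s) + g (t - s) * φ s) ?_ ?_ (hiA.neg.add hiB)
      · rw [this]
        simp [hg0]
      · apply ContinuousOn.mul
        · exact (hg_diff.continuous.comp (continuous_const.sub continuous_id)).continuousOn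
        · exact hfc.mono (Icc_subset_Icc le_rfl htb.le)
      · intro s hs
        have hsIcc : s ∈ Icc (0:ℝ) b := ⟨hs.1.le, by linarith [hs.2]⟩
        have h1 : HasDerivAt (fun y => g (t - y)) (-(deriv g (t - s))) s := by
          have inner : HasDerivAt (fun y : ℝ => t - y) (-1) s := (hasDerivAt_id s).const_sub t
          have := ((hg_diff (t - s)).hasDerivAt).comp s inner
          simpa [mul_neg_one, Function.comp_def] using this
        have h2 : HasDerivWithinAt f (φ s) (Icc 0 b) s :=
          ((hf.differentiableOn one_ne_zero) s hsIcc).hasDerivWithinAt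
        have h3 : HasDerivWithinAt (fun y => g (t - y) * f y)
            (-(deriv g (t - s)) * f s + g (t - s) * φ s) (Icc 0 b) s :=
          (h1.hasDerivWithinAt).mul h2
        have hmem : Icc (0:ℝ) b ∈ nhdsWithin s (Ioi s) := by
          apply mem_of_superset (Ioc_mem_nhdsGT_of_mem ⟨le_rfl, lt_of_lt_of_le hs.2 htb.le⟩)
          intro y hy
          exact ⟨by linarith [hs.1, hy.1], hy.2⟩
        have := h3.mono_of_mem_nhdsWithin hmem
        simpa [neg_mul] using this
    -- combine
    have hsplit : ∫ s in (0:ℝ)..t, (-(deriv g (t - s) * f s) + g (t - s) * φ s)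
        = -(∫ s in (0:ℝ)..t, deriv g (t - s) * f s) + ∫ s in (0:ℝ)..t, g (t - s) * φ s := by
      have hiA' : IntervalIntegrable (fun s => -(deriv g (t - s) * f s)) volume 0 t := hiA.neg
      rw [intervalIntegral.integral_add hiA' hiB, intervalIntegral.integral_neg]
    rw [e1, e2]
    have := hFTC
    rw [hsplit] at this
    linarith [this]
  -- Claim A : k ⋆ u₀ = f + g' ⋆ f a.e. on I
  have claimA : ∀ᵐ x : ℝ, x ∈ I → (kb ⋆[Lm] ub0) x = f x + (a0 ⋆[Lm] fb) x := by
    filter_upwards [hstep2, hstep3, hstep4, hstep5] with x h2 h3 h4 h5 hxI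
    rw [hstep1 x hxI.2.le, h2, h3 hxI, h4, h5 hxI.2.le, hstep6 x hxI]
    ring
  -- choose the exponential weight
  obtain ⟨c, hc0, hcnorm⟩ := exists_weight hb hg'
  set a : ℝ → ℝ := I.indicator (fun t => Real.exp (-(c * t)) * deriv g t) with hadef
  have ha : Integrable a volume := by
    rw [integrable_indicator_iff hImeas]
    apply Integrable.mono' hg'.norm
    · exact ((Real.continuous_exp.comp (continuous_const.mul continuous_id).neg
        ).aestronglyMeasurable.restrict.mul hg'.aestronglyMeasurable)
    · filter_upwards [ae_restrict_mem hImeas] with t ht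
      rw [norm_mul]
      calc ‖Real.exp (-(c * t))‖ * ‖deriv g t‖ ≤ 1 * ‖deriv g t‖ := by
            apply mul_le_mul_of_nonneg_right _ (norm_nonneg _)
            rw [Real.norm_eq_abs, abs_of_pos (Real.exp_pos _), Real.exp_le_one_iff]
            have : (0:ℝ) ≤ c * t := mul_nonneg hc0 ht.1.le
            linarith
        _ = ‖deriv g t‖ := one_mul _
  have hasupp : ∀ y, y ∉ I → a y = 0 := fun y hy => indicator_of_notMem hy _
  have ha_eq : ∀ s, a0 s = Real.exp (c * s) * a s := by
    intro s
    by_cases hmem : s ∈ I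
    · rw [ha0def, hadef, indicator_of_mem hmem, indicator_of_mem hmem, ← mul_assoc,
        ← Real.exp_add]
      simp
    · rw [ha0supp s hmem, hasupp s hmem, mul_zero]
  -- the weighted right-hand side
  set w : ℝ → ℝ := I.indicator (fun t => Real.exp (-(c * t)) * u0 t) with hwdef
  have hwint : Integrable w volume := by
    rw [integrable_indicator_iff hImeas]
    apply Integrable.mono' hu0int.norm.integrableOn
    · exact ((Real.continuous_exp.comp (continuous_const.mul continuous_id).neg
        ).aestronglyMeasurable.restrict.mul hu0int.aestronglyMeasurable.restrict)
    · filter_upwards [ae_restrict_mem hImeas] with t ht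
      rw [norm_mul]
      calc ‖Real.exp (-(c * t))‖ * ‖u0 t‖ ≤ 1 * ‖u0 t‖ := by
            apply mul_le_mul_of_nonneg_right _ (norm_nonneg _)
            rw [Real.norm_eq_abs, abs_of_pos (Real.exp_pos _), Real.exp_le_one_iff]
            have : (0:ℝ) ≤ c * t := mul_nonneg hc0 ht.1.le
            linarith
        _ = ‖u0 t‖ := one_mul _
  -- solve the weighted second-kind equation
  obtain ⟨v, hvint, hveq⟩ := exists_solution ha hwint hcnorm hImeas
  have hveq' : ∀ᵐ t : ℝ, v t + I.indicator (a ⋆[Lm] v) t = w t := by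
    filter_upwards [hveq] with t ht
    rwa [indicator_indicator, inter_self] at ht
  have hv0 : ∀ᵐ t : ℝ, t ∉ I → v t = 0 := by
    filter_upwards [hveq'] with t ht htI
    have h0 : I.indicator (a ⋆[Lm] v) t = 0 := indicator_of_notMem htI _
    have h1 : w t = 0 := indicator_of_notMem htI _
    rw [h0, add_zero, h1] at ht
    exact ht
  -- the solution u
  set u : ℝ → ℝ := I.indicator (fun t => Real.exp (c * t) * v t) with hudef
  have husupp : ∀ y, y ∉ I → u y = 0 := fun y hy => indicator_of_notMem hy _
  have huint : Integrable u volume := by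
    rw [integrable_indicator_iff hImeas]
    apply Integrable.mono' ((hvint.norm.const_mul (Real.exp (c * b))).integrableOn)
    · exact ((Real.continuous_exp.comp (continuous_const.mul continuous_id)
        ).aestronglyMeasurable.restrict.mul hvint.aestronglyMeasurable.restrict)
    · filter_upwards [ae_restrict_mem hImeas] with t ht
      rw [norm_mul]
      apply mul_le_mul_of_nonneg_right _ (norm_nonneg _)
      rw [Real.norm_eq_abs, abs_of_pos (Real.exp_pos _)]
      exact Real.exp_le_exp.2 (mul_le_mul_of_nonneg_left ht.2.le hc0)
  -- pointwise relation between weighted and unweighted convolutions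
  have hconv_uv : ∀ t : ℝ, (a0 ⋆[Lm] u) t = Real.exp (c * t) * (a ⋆[Lm] v) t := by
    intro t
    have hs_ae : ∀ᵐ s : ℝ, t - s ∉ I → v (t - s) = 0 :=
      (quasiMeasurePreserving_sub_left_of_right_invariant volume t).tendsto_ae.eventually hv0
    rw [convolution_def, convolution_def, ← MeasureTheory.integral_const_mul]
    apply MeasureTheory.integral_congr_ae
    filter_upwards [hs_ae] with s hs
    simp only [mul_apply']
    by_cases hmem : t - s ∈ I
    · rw [hudef, indicator_of_mem hmem, ha_eq s, ← mul_assoc, ← mul_assoc]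
      rw [show Real.exp (c * s) * a s * Real.exp (c * (t - s)) =
        (Real.exp (c * s) * Real.exp (c * (t - s))) * a s by ring, ← Real.exp_add]
      ring_nf
    · rw [husupp (t - s) hmem, hs hmem, mul_zero, mul_zero, mul_zero]
  -- Claim C : u + a0 ⋆ u = u0 a.e. on I
  have claimC : ∀ᵐ t : ℝ, t ∈ I → u t + (a0 ⋆[Lm] u) t = u0 t := by
    filter_upwards [hveq'] with t ht htI
    have h1 : u t = Real.exp (c * t) * v t := indicator_of_mem htI _
    have h2 : I.indicator (a ⋆[Lm] v) t = (a ⋆[Lm] v) t := indicator_of_mem htI _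
    have h3 : w t = Real.exp (-(c * t)) * u0 t := indicator_of_mem htI _
    rw [h2, h3] at ht
    rw [h1, hconv_uv t, ← mul_add, ht, ← mul_assoc, ← Real.exp_add]
    simp
  -- convolve Claim C with k
  set Cv : ℝ → ℝ := kb ⋆[Lm] u with hCvdef
  have hCvint : Integrable Cv volume := hkb.integrable_convolution Lm huint
  have hCvsupp : ∀ y ≤ 0, Cv y = 0 := fun y hy =>
    conv_zero_of_nonpos (fun z hz => hksupp z (hI_nonpos z hz))
      (fun z hz => husupp z (hI_nonpos z hz)) hy
  have ha0u_int : Integrable (a0 ⋆[Lm] u) volume := ha0.integrable_convolution Lm huint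
  have hE1 : ∀ᵐ y : ℝ, y < b → (u + (a0 ⋆[Lm] u)) y = ub0 y := by
    filter_upwards [claimC] with y hy hyb
    by_cases hmem : y ∈ I
    · rw [Pi.add_apply, hy hmem, hub0def, indicator_of_mem hmem]
    · have hy0 : y ≤ 0 := by
        by_contra hcon
        exact hmem ⟨not_le.1 hcon, hyb⟩
      rw [Pi.add_apply, husupp y hmem,
        conv_zero_of_nonpos (fun z hz => ha0supp z (hI_nonpos z hz))
          (fun z hz => husupp z (hI_nonpos z hz)) hy0,
        hub0def, indicator_of_notMem hmem, add_zero]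
  have hE2 : ∀ x ≤ b, (kb ⋆[Lm] (u + (a0 ⋆[Lm] u))) x = (kb ⋆[Lm] ub0) x := fun x hx =>
    conv_causal_congr_right (fun s hs => hksupp s (hI_nonpos s hs)) hE1 hx
  have hE3 : ∀ᵐ x : ℝ, (kb ⋆[Lm] (u + (a0 ⋆[Lm] u))) x
      = (kb ⋆[Lm] u) x + (kb ⋆[Lm] (a0 ⋆[Lm] u)) x := by
    filter_upwards [hkb.ae_convolution_exists Lm huint,
      hkb.ae_convolution_exists Lm ha0u_int] with x h1 h2
    exact h1.distrib_add h2
  have hcommka : (kb ⋆[Lm] a0) = (a0 ⋆[Lm] kb) := funext fun x => conv_comm kb a0 x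
  have hE4 : ∀ᵐ x : ℝ, (kb ⋆[Lm] (a0 ⋆[Lm] u)) x = (a0 ⋆[Lm] Cv) x := by
    filter_upwards [hkb.norm.ae_convolution_exists Lm
        (ha0.norm.integrable_convolution Lm huint.norm),
      ha0.norm.ae_convolution_exists Lm
        (hkb.norm.integrable_convolution Lm huint.norm)] with x hx1 hx2
    have hA : ((kb ⋆[Lm] a0) ⋆[Lm] u) x = (kb ⋆[Lm] (a0 ⋆[Lm] u)) x :=
      convolution_assoc Lm Lm Lm Lm (fun x y z => mul_assoc x y z)
        hkb.aestronglyMeasurable ha0.aestronglyMeasurable huint.aestronglyMeasurable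
        (hkb.ae_convolution_exists Lm ha0)
        (ha0.norm.ae_convolution_exists Lm huint.norm) hx1
    have hB : ((a0 ⋆[Lm] kb) ⋆[Lm] u) x = (a0 ⋆[Lm] (kb ⋆[Lm] u)) x :=
      convolution_assoc Lm Lm Lm Lm (fun x y z => mul_assoc x y z)
        ha0.aestronglyMeasurable hkb.aestronglyMeasurable huint.aestronglyMeasurable
        (ha0.ae_convolution_exists Lm hkb)
        (hkb.norm.ae_convolution_exists Lm huint.norm) hx2
    rw [← hA, hcommka, hB]
  -- the defect function
  set D : ℝ → ℝ := Cv - fb with hDdef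
  have hDapp : ∀ x, D x = Cv x - fb x := fun x => rfl
  have hDint : Integrable D volume := hCvint.sub hfbi
  set D' : ℝ → ℝ := I.indicator D with hD'def
  have hD'int : Integrable D' volume := hDint.indicator hImeas
  have hDfun : D = Cv + (-1 : ℝ) • fb := by
    funext x
    simp [hDdef, sub_eq_add_neg]
  have hE6 : ∀ᵐ x : ℝ, (a0 ⋆[Lm] D) x = (a0 ⋆[Lm] Cv) x - (a0 ⋆[Lm] fb) x := by
    filter_upwards [ha0.ae_convolution_exists Lm hCvint,
      ha0.ae_convolution_exists Lm (hfbi.smul (-1 : ℝ))] with x h1 h2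
    rw [hDfun, h1.distrib_add h2, convolution_smul]
    simp [sub_eq_add_neg]
  have hDD' : ∀ y < b, D y = D' y := by
    intro y hy
    by_cases hmem : y ∈ I
    · rw [hD'def, indicator_of_mem hmem]
    · have hy0 : y ≤ 0 := by
        by_contra hcon
        exact hmem ⟨not_le.1 hcon, hy⟩
      rw [hD'def, indicator_of_notMem hmem, hDapp, hCvsupp y hy0, hfbsupp y hmem, sub_zero]
  have hE7 : ∀ x ≤ b, (a0 ⋆[Lm] D) x = (a0 ⋆[Lm] D') x := fun x hx =>
    conv_causal_congr_right (fun s hs => ha0supp s (hI_nonpos s hs))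
      (Eventually.of_forall hDD') hx
  -- Claim E : D = -(a0 ⋆ D') a.e. on I
  have claimE : ∀ᵐ x : ℝ, x ∈ I → D x = -((a0 ⋆[Lm] D') x) := by
    filter_upwards [claimA, hE3, hE4, hE6] with x h1 h3 h4 h6 hxI
    have hmain : Cv x + (a0 ⋆[Lm] Cv) x = f x + (a0 ⋆[Lm] fb) x := by
      rw [← h4, ← h3, hE2 x hxI.2.le, h1 hxI]
    rw [← hE7 x hxI.2.le, h6, hDapp, hfbdef, indicator_of_mem hxI]
    linarith [hmain]
  -- the weighted defect
  set q : ℝ → ℝ := I.indicator (fun x => Real.exp (-(c * x)) * D x) with hqdef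
  have hqint : Integrable q volume := by
    rw [integrable_indicator_iff hImeas]
    apply Integrable.mono' hDint.norm.integrableOn
    · exact ((Real.continuous_exp.comp (continuous_const.mul continuous_id).neg
        ).aestronglyMeasurable.restrict.mul hDint.aestronglyMeasurable.restrict)
    · filter_upwards [ae_restrict_mem hImeas] with t ht
      rw [norm_mul]
      calc ‖Real.exp (-(c * t))‖ * ‖D t‖ ≤ 1 * ‖D t‖ := by
            apply mul_le_mul_of_nonneg_right _ (norm_nonneg _)
            rw [Real.norm_eq_abs, abs_of_pos (Real.exp_pos _), Real.exp_le_one_iff]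
            have : (0:ℝ) ≤ c * t := mul_nonneg hc0 ht.1.le
            linarith
        _ = ‖D t‖ := one_mul _
  have hq_pt : ∀ y, q y = Real.exp (-(c * y)) * D' y := by
    intro y
    by_cases hmem : y ∈ I
    · rw [hqdef, hD'def, indicator_of_mem hmem, indicator_of_mem hmem]
    · rw [hqdef, hD'def, indicator_of_notMem hmem, indicator_of_notMem hmem, mul_zero]
  have ha_pt : ∀ s, a s = Real.exp (-(c * s)) * a0 s := by
    intro s
    rw [ha_eq s, ← mul_assoc, ← Real.exp_add]
    simp
  have hq_a : ∀ x, (a ⋆[Lm] q) x = Real.exp (-(c * x)) * (a0 ⋆[Lm] D') x := by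
    intro x
    rw [convolution_def, convolution_def, ← MeasureTheory.integral_const_mul]
    apply MeasureTheory.integral_congr_ae
    apply Eventually.of_forall
    intro s
    simp only [mul_apply']
    rw [hq_pt (x - s), ha_pt s]
    rw [show Real.exp (-(c * s)) * a0 s * (Real.exp (-(c * (x - s))) * D' (x - s)) =
      (Real.exp (-(c * s)) * Real.exp (-(c * (x - s)))) * (a0 s * D' (x - s)) by ring,
      ← Real.exp_add]
    ring_nf
  have hqbound : ∀ᵐ x : ℝ, ‖q x‖ ≤ ‖(a ⋆[Lm] q) x‖ := by
    filter_upwards [claimE] with x hx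
    by_cases hmem : x ∈ I
    · have : q x = -((a ⋆[Lm] q) x) := by
        rw [hq_a x, hq_pt x, hD'def, indicator_of_mem hmem, hx hmem]
        ring
      rw [this, norm_neg]
    · rw [hqdef, indicator_of_notMem hmem, norm_zero]
      exact norm_nonneg _
  have hql : ∫ x, ‖q x‖ ≤ (∫ x, ‖a x‖) * ∫ x, ‖q x‖ := by
    calc ∫ x, ‖q x‖ ≤ ∫ x, ‖(a ⋆[Lm] q) x‖ :=
          integral_mono_ae hqint.norm (ha.integrable_convolution Lm hqint).norm hqbound
      _ ≤ (∫ x, ‖a x‖) * ∫ x, ‖q x‖ := integral_norm_conv_le ha hqint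
  have hq0 : ∫ x, ‖q x‖ = 0 := by
    have hnn : (0:ℝ) ≤ ∫ x, ‖q x‖ := integral_nonneg fun x => norm_nonneg _
    have hA : (0:ℝ) ≤ ∫ x, ‖a x‖ := integral_nonneg fun x => norm_nonneg _
    nlinarith [hql, hcnorm, hnn, hA]
  have hqzero : ∀ᵐ x : ℝ, q x = 0 := by
    have := (integral_eq_zero_iff_of_nonneg (fun x => norm_nonneg (q x)) hqint.norm).1 hq0
    filter_upwards [this] with x hx
    simpa using hx
  -- D vanishes a.e. on I
  have hDzero : ∀ᵐ x : ℝ, x ∈ I → Cv x = f x := by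
    filter_upwards [hqzero] with x hx hxI
    have h1 : q x = Real.exp (-(c * x)) * D x := by
      rw [hqdef, indicator_of_mem hxI]
    rw [h1] at hx
    have h2 : D x = 0 := by
      have := mul_eq_zero.1 hx
      rcases this with h | h
      · exact absurd h (Real.exp_ne_zero _)
      · exact h
    have h3 : fb x = f x := indicator_of_mem hxI f
    have := hDapp x
    rw [h2, h3] at this
    linarith [this]
  -- conclusion
  refine ⟨u, huint.integrableOn, ?_⟩
  filter_upwards [hDzero] with t ht htI
  have h1 : (kb ⋆[Lm] u) t = ∫ s in (0:ℝ)..t, kb (t - s) * u s :=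
    conv_eq_intervalIntegral hksupp husupp htI.1 htI.2.le
  have h2 : ∫ s in (0:ℝ)..t, kb (t - s) * u s = ∫ s in (0:ℝ)..t, k (t - s) * u s := by
    rw [intervalIntegral.integral_of_le htI.1.le, intervalIntegral.integral_of_le htI.1.le,
      integral_Ioc_eq_integral_Ioo, integral_Ioc_eq_integral_Ioo]
    apply setIntegral_congr_fun measurableSet_Ioo
    intro s hs
    have htsI : t - s ∈ I := ⟨by linarith [hs.2], by linarith [hs.1, htI.2]⟩
    simp only [hkbdef, indicator_of_mem htsI]
  rw [← h2, ← h1]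
  exact ht htI
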